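/- Let φ: ℝ → ℝ with φ(x) = 1 + cos(2πx) for |x| ≤ 1/2 and φ(x) = 0 otherwise, and for τ > 0 let ψ_τ: ℝ → ℝ be defined by ψ_τ(x) = (1+τ)^{−1/2}[4π²(1+τ)(φ*φ)(x/√(1+τ)) + (φ*φ)''(x/√(1+τ))], where * denotes convolution. Then ψ_τ(0) = 2π²(2 + 3τ)/√(1+τ); in particular ψ_τ(0) > 0. -/

import Mathlib

open scoped FourierTransform Real
open scoped Topology
open MeasureTheory Set

/-- The raised-cosine bump `φ(x) = 1 + cos(2πx)` on `[-1/2, 1/2]`, zero elsewhere. -/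
noncomputable def raisedCos : ℝ → ℝ :=
  fun x => if |x| ≤ 1/2 then 1 + Real.cos (2 * π * x) else 0

noncomputable def rcD : ℝ → ℝ :=
  fun x => if |x| ≤ 1/2 then -(2 * π) * Real.sin (2 * π * x) else 0

lemma rcD_of_le {x : ℝ} (h : |x| ≤ 1/2) : rcD x = -(2 * π) * Real.sin (2 * π * x) := if_pos h
lemma rcD_of_gt {x : ℝ} (h : 1/2 < |x|) : rcD x = 0 := if_neg (not_le.mpr h)
lemma raisedCos_of_le {x : ℝ} (h : |x| ≤ 1/2) : raisedCos x = 1 + Real.cos (2 * π * x) := if_pos h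
lemma raisedCos_of_gt {x : ℝ} (h : 1/2 < |x|) : raisedCos x = 0 := if_neg (not_le.mpr h)

lemma inner_hasDerivAt (x : ℝ) :
    HasDerivAt (fun y => 1 + Real.cos (2 * π * y)) (-(2 * π) * Real.sin (2 * π * x)) x := by
  have h1 : HasDerivAt (fun y : ℝ => 2 * π * y) (2 * π) x := by
    simpa using (hasDerivAt_id x).const_mul (2 * π)
  have := (h1.cos).const_add 1
  refine this.congr_deriv ?_
  ring

lemma raisedCos_hasDerivAt (x : ℝ) : HasDerivAt raisedCos (rcD x) x := by
  rcases lt_trichotomy |x| (1/2) with h | h | h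
  · have hmem : ∀ᶠ y in 𝓝 x, raisedCos y = 1 + Real.cos (2 * π * y) := by
      have : ∀ᶠ y in 𝓝 x, |y| < 1/2 :=
        (continuous_abs.continuousAt).eventually_lt continuousAt_const h
      filter_upwards [this] with y hy
      exact raisedCos_of_le hy.le
    rw [rcD_of_le h.le]
    exact (inner_hasDerivAt x).congr_of_eventuallyEq (hmem.mono fun y hy => hy)
  · -- boundary: x = 1/2 or x = -1/2
    have hx : x = 1/2 ∨ x = -(1/2) := (abs_eq (by norm_num : (0:ℝ) ≤ 1/2)).mp h
    have hsin : Real.sin (2 * π * x) = 0 := by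
      rcases hx with rfl | rfl
      · rw [show 2*π*(1/2 : ℝ) = π by ring, Real.sin_pi]
      · rw [show 2*π*(-(1/2) : ℝ) = -π by ring, Real.sin_neg, Real.sin_pi, neg_zero]
    have hval0 : rcD x = 0 := by rw [rcD_of_le h.le, hsin, mul_zero]
    have hcos : Real.cos (2 * π * x) = -1 := by
      rcases hx with rfl | rfl
      · rw [show 2*π*(1/2 : ℝ) = π by ring, Real.cos_pi]
      · rw [show 2*π*(-(1/2) : ℝ) = -π by ring, Real.cos_neg, Real.cos_pi]
    have hrc0 : raisedCos x = 0 := by rw [raisedCos_of_le h.le, hcos]; ring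
    rw [hval0]
    rcases hx with rfl | rfl
    · -- x = 1/2 : inner on Iic, zero on Ici
      have hIic : HasDerivWithinAt raisedCos 0 (Iic (1/2 : ℝ)) (1/2) := by
        have hinner : HasDerivWithinAt (fun y => 1 + Real.cos (2 * π * y)) 0 (Iic (1/2:ℝ)) (1/2) := by
          have := (inner_hasDerivAt (1/2)).hasDerivWithinAt (s := Iic (1/2:ℝ))
          rwa [show 2*π*(1/2 : ℝ) = π by ring, Real.sin_pi, mul_zero] at this
        refine hinner.congr_of_eventuallyEq ?_ (by rw [hrc0]; norm_num [show 2*π*(1/2 : ℝ) = π by ring, Real.cos_pi])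
        have h1 : ∀ᶠ y in 𝓝[Iic (1/2:ℝ)] (1/2), -(1/2:ℝ) < y :=
          eventually_nhdsWithin_of_eventually_nhds (eventually_gt_nhds (by norm_num))
        filter_upwards [h1, eventually_mem_nhdsWithin] with y hy1 hy2
        exact raisedCos_of_le (abs_le.mpr ⟨hy1.le, hy2⟩)
      have hIci : HasDerivWithinAt raisedCos 0 (Ici (1/2 : ℝ)) (1/2) := by
        refine (hasDerivWithinAt_const (1/2:ℝ) (Ici (1/2:ℝ)) 0).congr ?_ hrc0
        intro y hy
        rcases eq_or_lt_of_le (mem_Ici.mp hy) with rfl | hlt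
        · exact hrc0
        · exact raisedCos_of_gt (by rw [abs_of_pos (by linarith)]; exact hlt)
      have := hIic.union hIci
      rwa [Iic_union_Ici, hasDerivWithinAt_univ] at this
    · have hIic : HasDerivWithinAt raisedCos 0 (Iic (-(1/2) : ℝ)) (-(1/2)) := by
        refine (hasDerivWithinAt_const (-(1/2):ℝ) (Iic (-(1/2):ℝ)) 0).congr ?_ hrc0
        intro y hy
        rcases eq_or_lt_of_le (mem_Iic.mp hy) with rfl | hlt
        · exact hrc0
        · exact raisedCos_of_gt (by rw [abs_of_neg (by linarith)]; linarith)
      have hIci : HasDerivWithinAt raisedCos 0 (Ici (-(1/2) : ℝ)) (-(1/2)) := by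
        have hinner : HasDerivWithinAt (fun y => 1 + Real.cos (2 * π * y)) 0 (Ici (-(1/2):ℝ)) (-(1/2)) := by
          have := (inner_hasDerivAt (-(1/2))).hasDerivWithinAt (s := Ici (-(1/2):ℝ))
          rwa [show 2*π*(-(1/2) : ℝ) = -π by ring, Real.sin_neg, Real.sin_pi, neg_zero, mul_zero] at this
        refine hinner.congr_of_eventuallyEq ?_ (by rw [hrc0]; norm_num [show 2*π*(-(1/2) : ℝ) = -π by ring, Real.cos_neg, Real.cos_pi])
        have h1 : ∀ᶠ y in 𝓝[Ici (-(1/2):ℝ)] (-(1/2)), y < (1/2:ℝ) :=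
          eventually_nhdsWithin_of_eventually_nhds (eventually_lt_nhds (by norm_num))
        filter_upwards [h1, eventually_mem_nhdsWithin] with y hy1 hy2
        exact raisedCos_of_le (abs_le.mpr ⟨hy2, hy1.le⟩)
      have := hIic.union hIci
      rwa [Iic_union_Ici, hasDerivWithinAt_univ] at this
  · have hmem : ∀ᶠ y in 𝓝 x, raisedCos y = 0 := by
      have : ∀ᶠ y in 𝓝 x, 1/2 < |y| :=
        (continuousAt_const).eventually_lt (continuous_abs.continuousAt) h
      filter_upwards [this] with y hy
      exact raisedCos_of_gt hy
    rw [rcD_of_gt h]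
    exact (hasDerivAt_const x 0).congr_of_eventuallyEq hmem

lemma raisedCos_continuous : Continuous raisedCos :=
  continuous_iff_continuousAt.mpr fun x => (raisedCos_hasDerivAt x).continuousAt

lemma rcD_continuous : Continuous rcD := by
  have hset : {x : ℝ | |x| ≤ 1/2} = Icc (-(1/2)) (1/2) := by
    ext x; simp [abs_le]
  have : rcD = fun x => if x ∈ Icc (-(1/2):ℝ) (1/2) then -(2*π) * Real.sin (2*π*x) else 0 := by
    funext x
    simp only [rcD, mem_Icc, abs_le]
  rw [this]
  apply Continuous.if
  · intro a ha
    simp only [Set.setOf_mem_eq] at ha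
    rw [frontier_Icc (by norm_num : -(1/2:ℝ) ≤ 1/2)] at ha
    rcases ha with rfl | rfl
    · rw [show 2*π*(-(1/2) : ℝ) = -π by ring, Real.sin_neg, Real.sin_pi]; simp
    · rw [show 2*π*(1/2 : ℝ) = π by ring, Real.sin_pi]; simp
  · exact continuous_const.mul (Real.continuous_sin.comp (continuous_const.mul continuous_id))
  · exact continuous_const

lemma raisedCos_compactSupport : HasCompactSupport raisedCos := by
  apply HasCompactSupport.intro (isCompact_Icc (a := -(1/2:ℝ)) (b := 1/2))
  intro x hx
  apply raisedCos_of_gt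
  simp only [mem_Icc, not_and_or, not_le] at hx
  rcases hx with h | h
  · rw [abs_of_neg (by linarith)]; linarith
  · rw [abs_of_pos (by linarith)]; exact h

lemma rcD_compactSupport : HasCompactSupport rcD := by
  apply HasCompactSupport.intro (isCompact_Icc (a := -(1/2:ℝ)) (b := 1/2))
  intro x hx
  apply rcD_of_gt
  simp only [mem_Icc, not_and_or, not_le] at hx
  rcases hx with h | h
  · rw [abs_of_neg (by linarith)]; linarith
  · rw [abs_of_pos (by linarith)]; exact h

lemma deriv_raisedCos : deriv raisedCos = rcD :=
  funext fun x => (raisedCos_hasDerivAt x).deriv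

lemma raisedCos_contDiff : ContDiff ℝ 1 raisedCos := by
  rw [contDiff_one_iff_deriv]
  exact ⟨fun x => (raisedCos_hasDerivAt x).differentiableAt, deriv_raisedCos ▸ rcD_continuous⟩

/-- The autocorrelation `φ * φ` (convolution over ℝ with respect to Lebesgue measure). -/
noncomputable def raisedCosConv : ℝ → ℝ :=
  MeasureTheory.convolution raisedCos raisedCos (ContinuousLinearMap.lsmul ℝ ℝ)
    MeasureTheory.volume

lemma deriv_raisedCosConv : deriv raisedCosConv =
    MeasureTheory.convolution raisedCos rcD (ContinuousLinearMap.lsmul ℝ ℝ) MeasureTheory.volume := by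
  funext x
  have h := HasCompactSupport.hasDerivAt_convolution_right (ContinuousLinearMap.lsmul ℝ ℝ)
    (raisedCos_continuous.locallyIntegrable (μ := MeasureTheory.volume)) raisedCos_compactSupport raisedCos_contDiff x
  rw [deriv_raisedCos] at h
  exact h.deriv

lemma deriv2_raisedCosConv (x : ℝ) : deriv (deriv raisedCosConv) x =
    MeasureTheory.convolution rcD rcD (ContinuousLinearMap.lsmul ℝ ℝ) MeasureTheory.volume x := by
  rw [deriv_raisedCosConv]
  have h := HasCompactSupport.hasDerivAt_convolution_left (ContinuousLinearMap.lsmul ℝ ℝ)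
    raisedCos_compactSupport raisedCos_contDiff (rcD_continuous.locallyIntegrable (μ := MeasureTheory.volume)) x
  rw [deriv_raisedCos] at h
  exact h.deriv

lemma integral_indicator_helper (f g : ℝ → ℝ)
    (hfg : ∀ t, f t = Set.indicator (Icc (-(1/2):ℝ) (1/2)) g t) :
    ∫ t, f t = ∫ t in (-(1/2):ℝ)..(1/2), g t := by
  rw [show f = Set.indicator (Icc (-(1/2):ℝ) (1/2)) g from funext hfg,
    MeasureTheory.integral_indicator measurableSet_Icc,
    MeasureTheory.integral_Icc_eq_integral_Ioc,
    ← intervalIntegral.integral_of_le (by norm_num : (-(1/2):ℝ) ≤ 1/2)]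

lemma raisedCos_even (t : ℝ) : raisedCos (-t) = raisedCos t := by
  simp only [raisedCos, abs_neg, mul_neg, Real.cos_neg]

lemma rcD_odd (t : ℝ) : rcD (-t) = -rcD t := by
  simp only [rcD, abs_neg, mul_neg, Real.sin_neg]
  split <;> ring

lemma raisedCosConv_zero : raisedCosConv 0 = 3/2 := by
  have h0 : raisedCosConv 0 = ∫ t, raisedCos t * raisedCos t := by
    simp only [raisedCosConv, MeasureTheory.convolution, ContinuousLinearMap.lsmul_apply,
      smul_eq_mul, zero_sub, raisedCos_even]
  rw [h0, integral_indicator_helper _ (fun t => (1 + Real.cos (2*π*t))^2) ?ind]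
  case ind =>
    intro t
    by_cases h : |t| ≤ 1/2
    · rw [raisedCos_of_le h, Set.indicator_of_mem (by rw [mem_Icc, ← abs_le]; exact h)]
      ring
    · rw [raisedCos_of_gt (not_le.mp h), Set.indicator_of_notMem (by rw [mem_Icc, ← abs_le]; exact h)]
      ring
  -- now evaluate the interval integral via an antiderivative
  have key : ∀ x : ℝ, HasDerivAt (fun x => 3/2*x + Real.sin (2*π*x)/π + Real.sin (4*π*x)/(8*π))
      ((1 + Real.cos (2*π*x))^2) x := by
    intro x
    have h1 : HasDerivAt (fun y : ℝ => 2*π*y) (2*π) x := by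
      simpa using (hasDerivAt_id x).const_mul (2*π)
    have h2 : HasDerivAt (fun y : ℝ => 4*π*y) (4*π) x := by
      simpa using (hasDerivAt_id x).const_mul (4*π)
    have hA : HasDerivAt (fun y : ℝ => 3/2*y) (3/2) x := by
      simpa using (hasDerivAt_id x).const_mul (3/2:ℝ)
    have hB := (h1.sin).div_const π
    have hC := (h2.sin).div_const (8*π)
    have := (hA.add hB).add hC
    refine this.congr_deriv ?_
    have hc : Real.cos (4*π*x) = 2 * Real.cos (2*π*x)^2 - 1 := by
      rw [show (4:ℝ)*π*x = 2*(2*π*x) by ring, Real.cos_two_mul]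
    have hπ : (π:ℝ) ≠ 0 := Real.pi_ne_zero
    field_simp
    rw [show π * x * 4 = 4 * π * x by ring]
    linear_combination (8:ℝ) * hc
  rw [intervalIntegral.integral_eq_sub_of_hasDerivAt (fun x _ => key x)
    (Continuous.intervalIntegrable (by continuity) _ _)]
  rw [show 2*π*(1/2:ℝ) = π by ring, show 2*π*(-(1/2):ℝ) = -π by ring,
    show 4*π*(1/2:ℝ) = 2*π by ring, show 4*π*(-(1/2):ℝ) = -(2*π) by ring,
    Real.sin_pi, Real.sin_neg, Real.sin_pi]
  simp [Real.sin_two_pi]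
  norm_num

lemma rcDconv_zero :
    MeasureTheory.convolution rcD rcD (ContinuousLinearMap.lsmul ℝ ℝ) MeasureTheory.volume 0
      = -(2*π^2) := by
  have h0 : MeasureTheory.convolution rcD rcD (ContinuousLinearMap.lsmul ℝ ℝ)
      MeasureTheory.volume 0 = ∫ t, rcD t * (- rcD t) := by
    simp only [MeasureTheory.convolution, ContinuousLinearMap.lsmul_apply,
      smul_eq_mul, zero_sub, rcD_odd]
  rw [h0, integral_indicator_helper _ (fun t => -((2*π)^2 * Real.sin (2*π*t)^2)) ?ind]
  case ind =>
    intro t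
    by_cases h : |t| ≤ 1/2
    · rw [rcD_of_le h, Set.indicator_of_mem (by rw [mem_Icc, ← abs_le]; exact h)]
      ring
    · rw [rcD_of_gt (not_le.mp h), Set.indicator_of_notMem (by rw [mem_Icc, ← abs_le]; exact h)]
      ring
  have key : ∀ x : ℝ, HasDerivAt (fun x => -(2*π^2)*x + (π/2) * Real.sin (4*π*x))
      (-((2*π)^2 * Real.sin (2*π*x)^2)) x := by
    intro x
    have h2 : HasDerivAt (fun y : ℝ => 4*π*y) (4*π) x := by
      simpa using (hasDerivAt_id x).const_mul (4*π)
    have hA : HasDerivAt (fun y : ℝ => -(2*π^2)*y) (-(2*π^2)) x := by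
      simpa using (hasDerivAt_id x).const_mul (-(2*π^2):ℝ)
    have hC := (h2.sin).const_mul (π/2)
    have := hA.add hC
    refine this.congr_deriv ?_
    have hc : Real.cos (4*π*x) = 1 - 2 * Real.sin (2*π*x)^2 := by
      rw [show (4:ℝ)*π*x = 2*(2*π*x) by ring, Real.cos_two_mul, Real.sin_sq]
      ring
    nlinarith [hc]
  rw [intervalIntegral.integral_eq_sub_of_hasDerivAt (fun x _ => key x)
    (Continuous.intervalIntegrable (by continuity) _ _)]
  rw [show 4*π*(1/2:ℝ) = 2*π by ring, show 4*π*(-(1/2):ℝ) = -(2*π) by ring]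
  simp [Real.sin_two_pi]
  ring

/-- The univariate admissible function
`ψ_τ(x) = (1+τ)^{−1/2} [4π²(1+τ)(φ*φ)(x/√(1+τ)) + (φ*φ)''(x/√(1+τ))]`. -/
noncomputable def psiAdm (τ : ℝ) : ℝ → ℝ := fun x =>
  (Real.sqrt (1 + τ))⁻¹ *
    (4 * π ^ 2 * (1 + τ) * raisedCosConv (x / Real.sqrt (1 + τ)) +
      deriv (deriv raisedCosConv) (x / Real.sqrt (1 + τ)))

/-- For `τ > 0`, `ψ_τ(0) = 2π²(2 + 3τ)/√(1+τ)`; in particular `ψ_τ(0) > 0`. -/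
theorem psiAdm_at_zero (τ : ℝ) (hτ : 0 < τ) :
    psiAdm τ 0 = 2 * π ^ 2 * (2 + 3 * τ) / Real.sqrt (1 + τ) ∧ 0 < psiAdm τ 0 := by
  have hs : 0 < Real.sqrt (1 + τ) := Real.sqrt_pos.mpr (by linarith)
  have hz : (0 : ℝ) / Real.sqrt (1 + τ) = 0 := zero_div _
  have heq : psiAdm τ 0 = 2 * π ^ 2 * (2 + 3 * τ) / Real.sqrt (1 + τ) := by
    rw [psiAdm, hz, raisedCosConv_zero, deriv2_raisedCosConv, rcDconv_zero]
    field_simp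
    ring
  refine ⟨heq, ?_⟩
  rw [heq]
  have hπ : 0 < π ^ 2 := by positivity
  positivity
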